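/- Let Π be an orthogonal projection on ℂ^n with Π^⊥ = I − Π, and U_⊥ a unitary with U_⊥ Π^⊥ U_⊥† = Π. Let D and O be 2×2 unitary matrices with D diagonal and O off-diagonal (zero diagonal entries) in the standard basis. On ℂ^2 ⊗ ℂ^n define Ũ = (|1⟩⟨1| ⊗ I_n + |0⟩⟨0| ⊗ U_⊥)(D ⊗ Π + O ⊗ Π^⊥). Then Ũ is unitary and, for every n×n matrix ρ, the partial trace over the first factor of Ũ (|1⟩⟨1| ⊗ ρ) Ũ† equals Π ρ Π + U_⊥ Π^⊥ ρ Π^⊥ U_⊥†. Thus the reduced system dynamics is unaffected by the ancilla phases introduced by D and O. -/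

import Mathlib

open Matrix
open Kronecker

/-- Partial trace over the first (2-dimensional, ancilla) factor of a matrix on
`ℂ² ⊗ ℂⁿ`: the sum of the two diagonal `n × n` blocks. -/
noncomputable def trAncilla (n : ℕ) (M : Matrix (Fin 2 × Fin n) (Fin 2 × Fin n) ℂ) :
    Matrix (Fin n) (Fin n) ℂ :=
  Matrix.of fun i j => ∑ a : Fin 2, M (a, i) (a, j)

private lemma fin2_ne01 : (0:Fin 2) ≠ 1 := by decide
private lemma fin2_ne10 : (1:Fin 2) ≠ 0 := by decide

private lemma std_mul_ne01 (i l : Fin 2) (c d : ℂ) :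
    single i (0:Fin 2) c * single (1:Fin 2) l d = 0 :=
  Matrix.single_mul_single_of_ne (c := c) i 0 1 fin2_ne01 d

private lemma std_mul_ne10 (i l : Fin 2) (c d : ℂ) :
    single i (1:Fin 2) c * single (0:Fin 2) l d = 0 :=
  Matrix.single_mul_single_of_ne (c := c) i 1 0 fin2_ne10 d

private lemma kron_sub {n : ℕ} (A : Matrix (Fin 2) (Fin 2) ℂ)
    (X Y : Matrix (Fin n) (Fin n) ℂ) : A ⊗ₖ (X - Y) = A ⊗ₖ X - A ⊗ₖ Y := by
  ext ⟨a, i⟩ ⟨b, j⟩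
  simp [Matrix.kroneckerMap_apply, mul_sub]

private lemma trace_E10 : (single (1:Fin 2) (0:Fin 2) (1:ℂ)).trace = 0 := by
  rw [Matrix.trace_single_eq_of_ne]; exact fin2_ne10

private lemma trace_E01 : (single (0:Fin 2) (1:Fin 2) (1:ℂ)).trace = 0 := by
  rw [Matrix.trace_single_eq_of_ne]; exact fin2_ne01

private lemma kron_conjT {m n : ℕ} (A : Matrix (Fin m) (Fin m) ℂ)
    (B : Matrix (Fin n) (Fin n) ℂ) : (A ⊗ₖ B)ᴴ = Aᴴ ⊗ₖ Bᴴ := by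
  ext ⟨a, i⟩ ⟨b, j⟩
  simp [Matrix.conjTranspose_apply, Matrix.kroneckerMap_apply, mul_comm]

private lemma stdBasis_conjT (i j : Fin 2) :
    (single i j (1:ℂ))ᴴ = single j i (1:ℂ) := by
  ext a b
  simp [Matrix.conjTranspose_apply, Matrix.single, and_comm]

private lemma trAncilla_kron (n : ℕ) (A : Matrix (Fin 2) (Fin 2) ℂ)
    (B : Matrix (Fin n) (Fin n) ℂ) :
    trAncilla n (A ⊗ₖ B) = Matrix.trace A • B := by
  ext i j
  simp [trAncilla, Matrix.trace, Matrix.kroneckerMap_apply, Matrix.diag]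
  ring

private lemma trAncilla_add (n : ℕ) (M N : Matrix (Fin 2 × Fin n) (Fin 2 × Fin n) ℂ) :
    trAncilla n (M + N) = trAncilla n M + trAncilla n N := by
  ext i j; simp [trAncilla, Finset.sum_add_distrib]

private lemma trAncilla_smul (n : ℕ) (c : ℂ) (M : Matrix (Fin 2 × Fin n) (Fin 2 × Fin n) ℂ) :
    trAncilla n (c • M) = c • trAncilla n M := by
  ext i j
  simp [trAncilla]
  ring

private lemma fin2_sum_std :
    single (1:Fin 2) (1:Fin 2) (1:ℂ) + single (0:Fin 2) (0:Fin 2) (1:ℂ) = 1 := by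
  ext i j; fin_cases i <;> fin_cases j <;>
    simp [Matrix.single, Matrix.one_apply]

theorem ancilla_phases_do_not_matter (n : ℕ)
    (P : Matrix (Fin n) (Fin n) ℂ) (hP : P.IsHermitian) (hP2 : P * P = P)
    (U : Matrix (Fin n) (Fin n) ℂ) (hU : U ∈ Matrix.unitaryGroup (Fin n) ℂ)
    (hUperp : U * (1 - P) * Uᴴ = P)
    (D O : Matrix (Fin 2) (Fin 2) ℂ)
    (hD : D ∈ Matrix.unitaryGroup (Fin 2) ℂ) (hDdiag : D.IsDiag)
    (hO : O ∈ Matrix.unitaryGroup (Fin 2) ℂ) (hOoff : ∀ i, O i i = 0)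
    (Ut : Matrix (Fin 2 × Fin n) (Fin 2 × Fin n) ℂ)
    (hUt : Ut =
      (single (1 : Fin 2) 1 (1 : ℂ) ⊗ₖ (1 : Matrix (Fin n) (Fin n) ℂ)
          + single (0 : Fin 2) 0 (1 : ℂ) ⊗ₖ U)
        * (D ⊗ₖ P + O ⊗ₖ (1 - P))) :
    Ut ∈ Matrix.unitaryGroup (Fin 2 × Fin n) ℂ ∧
    ∀ ρ : Matrix (Fin n) (Fin n) ℂ,
      trAncilla n (Ut * (single (1 : Fin 2) 1 (1 : ℂ) ⊗ₖ ρ) * Utᴴ)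
        = P * ρ * P + U * (1 - P) * ρ * (1 - P) * Uᴴ := by
  set Q : Matrix (Fin n) (Fin n) ℂ := 1 - P with hQdef
  have hPH : Pᴴ = P := hP
  have hQH : Qᴴ = Q := by
    rw [hQdef, Matrix.conjTranspose_sub, Matrix.conjTranspose_one, hPH]
  have hPQ : P * Q = 0 := by
    rw [hQdef, mul_sub, mul_one, hP2, sub_self]
  have hQP : Q * P = 0 := by
    rw [hQdef, sub_mul, one_mul, hP2, sub_self]
  have hQ2 : Q * Q = Q := by
    rw [hQdef, sub_mul, one_mul, mul_sub, mul_one, hP2]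
    abel
  have hUU : U * Uᴴ = 1 := by
    have h := (Matrix.mem_unitaryGroup_iff).mp hU
    rwa [Matrix.star_eq_conjTranspose] at h
  -- scalar unitarity facts
  have hDe : Dᴴ * D = 1 := by
    have h := (Matrix.mem_unitaryGroup_iff').mp hD
    rwa [Matrix.star_eq_conjTranspose] at h
  have hOe : Oᴴ * O = 1 := by
    have h := (Matrix.mem_unitaryGroup_iff').mp hO
    rwa [Matrix.star_eq_conjTranspose] at h
  have hD01 : D 0 1 = 0 := hDdiag fin2_ne01
  have hD10 : D 1 0 = 0 := hDdiag fin2_ne10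
  have hd1 : star (D 1 1) * D 1 1 = 1 := by
    have h : (Dᴴ * D) 1 1 = (1 : Matrix (Fin 2) (Fin 2) ℂ) 1 1 := by rw [hDe]
    simpa [Matrix.mul_apply, Fin.sum_univ_two, Matrix.conjTranspose_apply, hD01,
      Matrix.one_apply] using h
  have hd0 : star (D 0 0) * D 0 0 = 1 := by
    have h : (Dᴴ * D) 0 0 = (1 : Matrix (Fin 2) (Fin 2) ℂ) 0 0 := by rw [hDe]
    simpa [Matrix.mul_apply, Fin.sum_univ_two, Matrix.conjTranspose_apply, hD10,
      Matrix.one_apply] using h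
  have ha : star (O 1 0) * O 1 0 = 1 := by
    have h : (Oᴴ * O) 0 0 = (1 : Matrix (Fin 2) (Fin 2) ℂ) 0 0 := by rw [hOe]
    simpa [Matrix.mul_apply, Fin.sum_univ_two, Matrix.conjTranspose_apply, hOoff,
      Matrix.one_apply] using h
  have hb : star (O 0 1) * O 0 1 = 1 := by
    have h : (Oᴴ * O) 1 1 = (1 : Matrix (Fin 2) (Fin 2) ℂ) 1 1 := by rw [hOe]
    simpa [Matrix.mul_apply, Fin.sum_univ_two, Matrix.conjTranspose_apply, hOoff,
      Matrix.one_apply] using h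
  -- canonical forms of D and O
  have hDform : D = D 0 0 • single (0:Fin 2) 0 (1:ℂ)
      + D 1 1 • single (1:Fin 2) 1 (1:ℂ) := by
    ext i j
    fin_cases i <;> fin_cases j <;>
      simp [Matrix.single, hD01, hD10]
  have hOform : O = O 0 1 • single (0:Fin 2) 1 (1:ℂ)
      + O 1 0 • single (1:Fin 2) 0 (1:ℂ) := by
    ext i j
    fin_cases i <;> fin_cases j <;>
      simp [Matrix.single, hOoff]
  -- four-term canonical form of Ut
  have hUtform : Ut =
      D 1 1 • (single (1:Fin 2) 1 (1:ℂ) ⊗ₖ P)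
      + O 1 0 • (single (1:Fin 2) 0 (1:ℂ) ⊗ₖ Q)
      + D 0 0 • (single (0:Fin 2) 0 (1:ℂ) ⊗ₖ (U * P))
      + O 0 1 • (single (0:Fin 2) 1 (1:ℂ) ⊗ₖ (U * Q)) := by
    conv_lhs => rw [hUt, hDform, hOform]
    simp only [Matrix.smul_kronecker, Matrix.kronecker_smul, add_mul, mul_add,
      Matrix.smul_mul, Matrix.mul_smul, ← Matrix.mul_kronecker_mul,
      Matrix.single_mul_single_same, std_mul_ne01, std_mul_ne10,
      Matrix.add_kronecker, Matrix.kronecker_add, Matrix.zero_kronecker, smul_zero,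
      one_mul, Matrix.one_mul, mul_one]
    abel
  have hUtH : Utᴴ =
      star (D 1 1) • (single (1:Fin 2) 1 (1:ℂ) ⊗ₖ P)
      + star (O 1 0) • (single (0:Fin 2) 1 (1:ℂ) ⊗ₖ Q)
      + star (D 0 0) • (single (0:Fin 2) 0 (1:ℂ) ⊗ₖ (P * Uᴴ))
      + star (O 0 1) • (single (1:Fin 2) 0 (1:ℂ) ⊗ₖ (Q * Uᴴ)) := by
    rw [hUtform]
    simp only [Matrix.conjTranspose_add, Matrix.conjTranspose_smul, kron_conjT,
      stdBasis_conjT, Matrix.conjTranspose_mul, hPH, hQH]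
  have hUPU : U * P * Uᴴ = Q := by
    have h2 : U * P * Uᴴ + U * Q * Uᴴ = 1 := by
      have hsum : U * P + U * Q = U := by
        rw [hQdef, mul_sub, mul_one]; abel
      calc U * P * Uᴴ + U * Q * Uᴴ = (U * P + U * Q) * Uᴴ := by rw [add_mul]
        _ = U * Uᴴ := by rw [hsum]
        _ = 1 := hUU
    rw [hUperp] at h2
    rw [hQdef, eq_sub_iff_add_eq]
    exact h2
  -- products of the four terms
  have hd1' : D 1 1 * star (D 1 1) = 1 := by rw [mul_comm]; exact hd1
  have hd0' : D 0 0 * star (D 0 0) = 1 := by rw [mul_comm]; exact hd0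
  have ha' : O 1 0 * star (O 1 0) = 1 := by rw [mul_comm]; exact ha
  have hb' : O 0 1 * star (O 0 1) = 1 := by rw [mul_comm]; exact hb
  have e1 : P * (Q * Uᴴ) = 0 := by rw [← mul_assoc, hPQ, Matrix.zero_mul]
  have e2 : Q * (P * Uᴴ) = 0 := by rw [← mul_assoc, hQP, Matrix.zero_mul]
  have e3 : U * P * Q = 0 := by rw [mul_assoc, hPQ, Matrix.mul_zero]
  have e4 : U * Q * P = 0 := by rw [mul_assoc, hQP, Matrix.mul_zero]
  have e5 : U * P * (P * Uᴴ) = Q := by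
    rw [← mul_assoc, mul_assoc U P P, hP2, hUPU]
  have e6 : U * Q * (Q * Uᴴ) = P := by
    rw [← mul_assoc, mul_assoc U Q Q, hQ2, hUperp]
  have goal_eq : single (1:Fin 2) (1:Fin 2) (1:ℂ) ⊗ₖ (1 : Matrix (Fin n) (Fin n) ℂ)
      + single (0:Fin 2) (0:Fin 2) (1:ℂ) ⊗ₖ (1 : Matrix (Fin n) (Fin n) ℂ) = 1 := by
    rw [← Matrix.add_kronecker, fin2_sum_std, Matrix.one_kronecker_one]
  have key1 : Ut * Utᴴ = 1 := by
    rw [hUtH, hUtform]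
    simp only [add_mul, mul_add, Matrix.smul_mul, Matrix.mul_smul, smul_smul,
      ← Matrix.mul_kronecker_mul, Matrix.single_mul_single_same, std_mul_ne01, std_mul_ne10,
      Matrix.zero_kronecker, Matrix.kronecker_zero, smul_zero, add_zero, zero_add,
      one_mul, mul_one, hP2, hQ2, e1, e2, e3, e4, e5, e6,
      hd1', hd0', ha', hb', hd1, hd0, ha, hb, one_smul]
    refine Eq.trans ?_ goal_eq
    rw [hQdef]
    simp only [kron_sub]
    abel
  constructor
  · rw [Matrix.mem_unitaryGroup_iff, Matrix.star_eq_conjTranspose]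
    exact key1
  · intro ρ
    rw [hUtH, hUtform]
    simp only [add_mul, mul_add, Matrix.smul_mul, Matrix.mul_smul, smul_smul,
      ← Matrix.mul_kronecker_mul, Matrix.single_mul_single_same, std_mul_ne01, std_mul_ne10,
      Matrix.zero_kronecker, Matrix.kronecker_zero, smul_zero, add_zero, zero_add,
      one_mul, mul_one, hd1', hd0', ha', hb', hd1, hd0, ha, hb, one_smul]
    simp only [trAncilla_add, trAncilla_smul, trAncilla_kron,
      Matrix.trace_single_eq_same, trace_E10, trace_E01, zero_smul, one_smul,
      smul_zero, add_zero, zero_add]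
    rw [mul_assoc (U * Q * ρ) Q Uᴴ]
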